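/- (Fully explicit no arbitrage domain for the Extremal Decorrelated SVI.) Let ρ = 0, b = 2 and γ > −1. Then the Extremal Decorrelated SVI is arbitrage-free if and only if γ > 0, |μ| < γ and σ ≥ 1/(γ − |μ|); equivalently, writing μ = q·γ with q ∈ (−1, 1), if and only if γ > 0 and σ ≥ 1/(γ·(1−|q|)). -/

import Mathlib

/-- SVI normalized total variance shape: `N(l) = γ + ρ·l + √(l²+1)`. -/
noncomputable def Nf (γ ρ l : ℝ) : ℝ := γ + ρ * l + Real.sqrt (l ^ 2 + 1)

/-- `N'(l) = ρ + l/√(l²+1)`. -/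
noncomputable def Nf' (ρ l : ℝ) : ℝ := ρ + l / Real.sqrt (l ^ 2 + 1)

/-- `N''(l) = (l²+1)^(−3/2)`. -/
noncomputable def Nf'' (l : ℝ) : ℝ := (l ^ 2 + 1) ^ (-(3 : ℝ) / 2)

/-- `h(l) = 1 − N'(l)·(l+μ)/(2N(l))`. -/
noncomputable def hf (γ ρ μ l : ℝ) : ℝ := 1 - Nf' ρ l * (l + μ) / (2 * Nf γ ρ l)

/-- `g(l) = N'(l)/4`. -/
noncomputable def gf (ρ l : ℝ) : ℝ := Nf' ρ l / 4

/-- `g₂(l) = N''(l) − N'(l)²/(2N(l))`. -/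
noncomputable def g2 (γ ρ l : ℝ) : ℝ := Nf'' l - (Nf' ρ l) ^ 2 / (2 * Nf γ ρ l)

/-- `G₁(l) = (h(l) − b·g(l))·(h(l) + b·g(l))`. -/
noncomputable def G1 (γ b ρ μ l : ℝ) : ℝ :=
  (hf γ ρ μ l - b * gf ρ l) * (hf γ ρ μ l + b * gf ρ l)

/-- Fukasawa (weak no-arbitrage) conditions: both factors of `G₁` are positive on `ℝ`. -/
def FukasawaCond (γ b ρ μ : ℝ) : Prop :=
  ∀ l : ℝ, 0 < hf γ ρ μ l - b * gf ρ l ∧ 0 < hf γ ρ μ l + b * gf ρ l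

/-- No Butterfly arbitrage (Martini–Mingone characterization): Fukasawa conditions plus
`G₁ + (b/(2σ))·g₂ ≥ 0` on `ℝ`. -/
def ArbitrageFree (γ b ρ μ σ : ℝ) : Prop :=
  FukasawaCond γ b ρ μ ∧ ∀ l : ℝ, 0 ≤ G1 γ b ρ μ l + b / (2 * σ) * g2 γ ρ l

noncomputable def numP (x γ μ t : ℝ) : ℝ :=
  (-4)*x*t + (-4)*x*μ + 4*x*γ + 12*x^2 + 4*x^2*μ^2 + (-8)*x^2*γ*t + (-16)*x^2*γ*μ + 12*x^2*γ^2 + 32*x^3*t + (-24)*x^3*μ + 64*x^3*γ + 52*x^4 + (-4)*x^4*μ^2 + 136*x^4*γ*t + (-16)*x^4*γ*μ + 52*x^4*γ^2 + 72*x^5*t + 120*x^5*γ + 128*x^5*γ^2*t + 52*x^6 + (-4)*x^6*μ^2 + 136*x^6*γ*t + 16*x^6*γ*μ + 52*x^6*γ^2 + 32*x^7*t + 24*x^7*μ + 64*x^7*γ + 12*x^8 + 4*x^8*μ^2 + (-8)*x^8*γ*t + 16*x^8*γ*μ + 12*x^8*γ^2 + (-4)*x^9*t + 4*x^9*μ +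 4*x^9*γ

noncomputable def numQ (x γ μ t : ℝ) : ℝ :=
  (-4)*t + (-4)*μ + 4*γ + 12*x + 4*x*μ^2 + (-8)*x*γ*t + (-16)*x*γ*μ + 12*x*γ^2 + 32*x^2*t + (-24)*x^2*μ + 64*x^2*γ + 52*x^3 + (-4)*x^3*μ^2 + 136*x^3*γ*t + (-16)*x^3*γ*μ + 52*x^3*γ^2 + 72*x^4*t + 120*x^4*γ + 128*x^4*γ^2*t + 52*x^5 + (-4)*x^5*μ^2 + 136*x^5*γ*t + 16*x^5*γ*μ + 52*x^5*γ^2 + 32*x^6*t + 24*x^6*μ + 64*x^6*γ + 12*x^7 + 4*x^7*μ^2 + (-8)*x^7*γ*t + 16*x^7*γ*μ + 12*x^7*γ^2 + (-4)*x^8*t + 4*x^8*μ + 4*x^8*γ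

noncomputable def FmN (x γ μ : ℝ) : ℝ := -2*x*μ + 2*x*γ + 6*x^2 + 2*x^3*μ + 6*x^3*γ + 2*x^4
noncomputable def FpN (x γ μ : ℝ) : ℝ := 2 + -2*x*μ + 6*x*γ + 6*x^2 + 2*x^3*μ + 2*x^3*γ

set_option maxHeartbeats 1000000 in
lemma main_id (γ μ t l : ℝ) (hγ : -1 < γ) (x : ℝ) (hx : x = Real.sqrt (l ^ 2 + 1) - l) :
    0 < x ∧ 0 < x ^ 2 + 1 + 2 * γ * x ∧
    hf γ 0 μ l - 2 * gf 0 l = FmN x γ μ / (2 * (x ^ 2 + 1) * (x ^ 2 + 1 + 2 * γ * x)) ∧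
    hf γ 0 μ l + 2 * gf 0 l = FpN x γ μ / (2 * (x ^ 2 + 1) * (x ^ 2 + 1 + 2 * γ * x)) ∧
    G1 γ 2 0 μ l + t * g2 γ 0 l
      = numP x γ μ t / (4 * (x ^ 2 + 1) ^ 3 * (x ^ 2 + 1 + 2 * γ * x) ^ 2) ∧
    l * (G1 γ 2 0 μ l + t * g2 γ 0 l)
      = (1 - x ^ 2) * numQ x γ μ t / (8 * (x ^ 2 + 1) ^ 3 * (x ^ 2 + 1 + 2 * γ * x) ^ 2) := by
  have h0 : (0:ℝ) ≤ l ^ 2 + 1 := by positivity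
  set s := Real.sqrt (l ^ 2 + 1) with hs
  have hs2 : s ^ 2 = l ^ 2 + 1 := Real.sq_sqrt h0
  have hsn : 0 ≤ s := Real.sqrt_nonneg _
  have hs1 : 1 ≤ s := by nlinarith
  have hls : l < s := by nlinarith
  have hxp : 0 < x := by rw [hx]; linarith
  have hN : 0 < γ + s := by linarith
  have hNNs : x ^ 2 + 1 + 2 * γ * x = 2 * x * (γ + s) := by
    linear_combination (x - s - l) * hx - hs2
  have hNN : 0 < x ^ 2 + 1 + 2 * γ * x := by rw [hNNs]; positivity
  have hlx : 2 * l * x = 1 - x ^ 2 := by linear_combination (x + s + l) * hx + hs2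
  have hsx : 2 * s * x = x ^ 2 + 1 := by linear_combination (2*s - x - s + l) * hx + hs2
  have hsv : s = (x ^ 2 + 1) / (2 * x) := by
    rw [eq_div_iff (by positivity)]; linear_combination hsx
  have hlv : l = (1 - x ^ 2) / (2 * x) := by
    rw [eq_div_iff (by positivity)]; linear_combination hlx
  have hNpp : Nf'' l = (s ^ 3)⁻¹ := by
    rw [Nf'', ← hs2, ← Real.rpow_natCast s 2, ← Real.rpow_mul hsn,
      show (2:ℕ) * (-(3:ℝ)/2) = ((-3 : ℤ) : ℝ) by norm_num, Real.rpow_intCast, zpow_neg]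
    norm_cast
  have hPQ : numP x γ μ t = x * numQ x γ μ t := by simp only [numP, numQ]; ring
  have ne1 : x ≠ 0 := hxp.ne'
  have ne2 : (x ^ 2 + 1 : ℝ) ≠ 0 := by positivity
  have ne3 : x ^ 2 + 1 + 2 * γ * x ≠ 0 := hNN.ne'
  have ne5 : γ * (2 * x) + (x ^ 2 + 1) ≠ 0 := fun h => ne3 (by linarith)
  have ne4 : (x*4 + x^2*γ*8 + x^3*8 + x^4*γ*8 + x^5*4 : ℝ) ≠ 0 := by
    have e : (x*4 + x^2*γ*8 + x^3*8 + x^4*γ*8 + x^5*4 : ℝ)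
        = 4*x*((x^2+1)*(x^2+1+2*γ*x)) := by ring
    rw [e]; positivity
  have ne6 : (1 + x * γ * 2 + x ^ 2 : ℝ) ≠ 0 := fun h => ne3 (by linarith)
  have ne7 : x * 2 * γ + (x ^ 2 + 1) ≠ 0 := fun h => ne3 (by linarith)
  have ne8 : x ^ 2 + 1 + x * 2 * γ ≠ 0 := fun h => ne3 (by linarith)
  refine ⟨hxp, hNN, ?_, ?_, ?_, ?_⟩
  · rw [hf, gf, Nf, Nf', FmN, ← hs, hsv, hlv]
    simp only [zero_mul, zero_add, add_zero, mul_zero] at *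
    field_simp [ne1, ne2, ne3, ne5, ne6, ne7, ne8]
    ring
  · rw [hf, gf, Nf, Nf', FpN, ← hs, hsv, hlv]
    simp only [zero_mul, zero_add, add_zero, mul_zero] at *
    field_simp [ne1, ne2, ne3, ne5, ne6, ne7, ne8]
    ring
  · rw [G1, g2, hNpp, hf, gf, Nf, Nf', ← hs, hsv, hlv]
    simp only [zero_mul, zero_add, add_zero, mul_zero] at *
    field_simp [ne1, ne2, ne3, ne5, ne6, ne7, ne8]
    simp only [numP]
    ring
  · have e3 : G1 γ 2 0 μ l + t * g2 γ 0 l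
        = numP x γ μ t / (4 * (x ^ 2 + 1) ^ 3 * (x ^ 2 + 1 + 2 * γ * x) ^ 2) := by
      rw [G1, g2, hNpp, hf, gf, Nf, Nf', ← hs, hsv, hlv]
      simp only [zero_mul, zero_add, add_zero, mul_zero] at *
      field_simp [ne1, ne2, ne3, ne5, ne6, ne7, ne8]
      simp only [numP]
      ring
    rw [e3, hPQ, hlv]
    field_simp [ne1, ne2, ne3, ne5, ne6, ne7, ne8]
    simp only [numQ]
    ring

lemma key_nonneg (x m d : ℝ) (hx : 0 ≤ x) (hm : 0 ≤ m) (hd : 0 ≤ d) :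
    0 ≤ numP x (m + d) m d := by
  obtain ⟨a, rfl⟩ : ∃ a : ℝ, x = a ^ 2 := ⟨Real.sqrt x, (Real.sq_sqrt hx).symm⟩
  obtain ⟨b, rfl⟩ : ∃ b : ℝ, m = b ^ 2 := ⟨Real.sqrt m, (Real.sq_sqrt hm).symm⟩
  obtain ⟨c, rfl⟩ : ∃ c : ℝ, d = c ^ 2 := ⟨Real.sqrt d, (Real.sq_sqrt hd).symm⟩
  have h : numP (a ^ 2) (b ^ 2 + c ^ 2) (b ^ 2) (c ^ 2)
      = 12*a^4 + 4*a^4*c^4 + 96*a^6*c^2 + 40*a^6*b^2 + 52*a^8 + 188*a^8*c^4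
        + 224*a^8*b^2*c^2 + 32*a^8*b^4 + 192*a^10*c^2 + 128*a^10*c^6 + 120*a^10*b^2
        + 256*a^10*b^2*c^4 + 128*a^10*b^4*c^2 + 52*a^12 + 188*a^12*c^4 + 256*a^12*b^2*c^2
        + 64*a^12*b^4 + 96*a^14*c^2 + 88*a^14*b^2 + 12*a^16 + 4*a^16*c^4
        + 32*a^16*b^2*c^2 + 32*a^16*b^4 + 8*a^18*b^2 := by
    simp only [numP]; ring
  rw [h]; positivity

lemma interp (n0 C t d : ℝ) (h0 : 0 ≤ n0) (hd : 0 ≤ n0 + d * C) (ht : 0 ≤ t) (htd : t ≤ d) :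
    0 ≤ n0 + t * C := by
  rcases le_or_gt 0 C with h | h
  · nlinarith
  · nlinarith

lemma hf_neg (γ μ l : ℝ) : hf γ 0 (-μ) l = hf γ 0 μ (-l) := by
  simp only [hf, Nf, Nf', neg_sq]; ring

lemma gf_neg (l : ℝ) : gf 0 (-l) = - gf 0 l := by
  simp only [gf, Nf', neg_sq]; ring

lemma g2_neg (γ l : ℝ) : g2 γ 0 (-l) = g2 γ 0 l := by
  simp only [g2, Nf, Nf', Nf'', neg_sq]; ring

lemma G1_neg (γ μ l : ℝ) : G1 γ 2 0 (-μ) l = G1 γ 2 0 μ (-l) := by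
  simp only [G1, hf_neg, gf_neg]; ring

lemma af_neg (γ μ σ : ℝ) (h : ArbitrageFree γ 2 0 μ σ) : ArbitrageFree γ 2 0 (-μ) σ := by
  obtain ⟨hF, hB⟩ := h
  constructor
  · intro l
    obtain ⟨h1, h2⟩ := hF (-l)
    constructor
    · rw [show hf γ 0 (-μ) l - 2 * gf 0 l = hf γ 0 μ (-l) + 2 * gf 0 (-l) by
        rw [hf_neg, gf_neg]; ring]
      exact h2
    · rw [show hf γ 0 (-μ) l + 2 * gf 0 l = hf γ 0 μ (-l) - 2 * gf 0 (-l) by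
        rw [hf_neg, gf_neg]; ring]
      exact h1
  · intro l
    rw [G1_neg, show g2 γ 0 l = g2 γ 0 (-l) from (g2_neg γ l).symm]
    exact hB (-l)

open Filter Topology

lemma tendsto_xOf : Tendsto (fun l : ℝ => Real.sqrt (l ^ 2 + 1) - l) atTop (𝓝 0) := by
  have h1 : Tendsto (fun l : ℝ => l⁻¹) atTop (𝓝 (0:ℝ)) := tendsto_inv_atTop_zero
  have h2 : Tendsto (fun _ : ℝ => (0:ℝ)) atTop (𝓝 (0:ℝ)) := tendsto_const_nhds
  refine tendsto_of_tendsto_of_tendsto_of_le_of_le' h2 h1 ?_ ?_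
  · filter_upwards [eventually_gt_atTop (0:ℝ)] with l hl
    have hs2 : (Real.sqrt (l ^ 2 + 1)) ^ 2 = l ^ 2 + 1 := Real.sq_sqrt (by positivity)
    have hsn : 0 ≤ Real.sqrt (l ^ 2 + 1) := Real.sqrt_nonneg _
    nlinarith
  · filter_upwards [eventually_gt_atTop (0:ℝ)] with l hl
    have hs2 : (Real.sqrt (l ^ 2 + 1)) ^ 2 = l ^ 2 + 1 := Real.sq_sqrt (by positivity)
    have hsn : 0 ≤ Real.sqrt (l ^ 2 + 1) := Real.sqrt_nonneg _
    have hls : l < Real.sqrt (l ^ 2 + 1) := by nlinarith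
    rw [inv_eq_one_div, le_div_iff₀ hl]
    nlinarith [mul_nonneg hsn (sub_pos.2 hls).le]

lemma limit_formula (γ μ t : ℝ) (hγ : -1 < γ) :
    Tendsto (fun l : ℝ => l * (G1 γ 2 0 μ l + t * g2 γ 0 l)) atTop (𝓝 ((γ - μ - t) / 2)) := by
  have hc : ContinuousAt
      (fun x : ℝ => (1 - x ^ 2) * numQ x γ μ t / (8 * (x ^ 2 + 1) ^ 3 * (x ^ 2 + 1 + 2 * γ * x) ^ 2)) 0 := by
    apply ContinuousAt.div
    · simp only [numQ]; fun_prop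
    · fun_prop
    · norm_num
  have h0 : ((1:ℝ) - 0 ^ 2) * numQ 0 γ μ t / (8 * ((0:ℝ) ^ 2 + 1) ^ 3 * ((0:ℝ) ^ 2 + 1 + 2 * γ * 0) ^ 2)
      = (γ - μ - t) / 2 := by
    simp only [numQ]; norm_num; ring
  have hT := hc.tendsto.comp tendsto_xOf
  rw [h0] at hT
  apply hT.congr
  intro l
  obtain ⟨_, _, _, _, _, e4⟩ := main_id γ μ t l hγ _ rfl
  exact (e4.trans rfl).symm

lemma necc (γ μ σ : ℝ) (hγ : -1 < γ) (hσ : 0 < σ) (h : ArbitrageFree γ 2 0 μ σ) :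
    1 / σ ≤ γ - μ := by
  have h2σ : (2:ℝ) / (2 * σ) = 1 / σ := by
    rw [div_eq_div_iff (by positivity) (by positivity)]; ring
  have hev : ∀ᶠ l in atTop, 0 ≤ l * (G1 γ 2 0 μ l + (1/σ) * g2 γ 0 l) := by
    filter_upwards [eventually_ge_atTop (0:ℝ)] with l hl
    have hb := h.2 l
    rw [h2σ] at hb
    exact mul_nonneg hl hb
  have hlim := ge_of_tendsto (limit_formula γ μ (1/σ) hγ) hev
  linarith

lemma suff (γ μ σ : ℝ) (hμ0 : 0 ≤ μ) (hμγ : μ < γ) (hσ : 0 < σ) (h1σ : 1 / σ ≤ γ - μ) :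
    ArbitrageFree γ 2 0 μ σ := by
  have hγ : -1 < γ := by linarith
  have h2σ : (2:ℝ) / (2 * σ) = 1 / σ := by
    rw [div_eq_div_iff (by positivity) (by positivity)]; ring
  constructor
  · intro l
    obtain ⟨hxp, hNN, e1, e2, _, _⟩ := main_id γ μ 0 l hγ _ rfl
    set x := Real.sqrt (l ^ 2 + 1) - l
    have hden : (0:ℝ) < 2 * (x ^ 2 + 1) * (x ^ 2 + 1 + 2 * γ * x) := by positivity
    constructor
    · rw [e1]
      apply div_pos _ hden
      simp only [FmN]
      nlinarith [mul_pos hxp (sub_pos.2 hμγ), pow_pos hxp 2, pow_pos hxp 4,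
        mul_pos (pow_pos hxp 3) (show (0:ℝ) < 3*γ + μ by linarith)]
    · rw [e2]
      apply div_pos _ hden
      simp only [FpN]
      nlinarith [mul_pos hxp (show (0:ℝ) < 3*γ - μ by linarith), pow_pos hxp 2,
        mul_pos (pow_pos hxp 3) (show (0:ℝ) < γ + μ by linarith)]
  · intro l
    obtain ⟨hxp, hNN, _, _, e3, _⟩ := main_id γ μ (1/σ) l hγ _ rfl
    set x := Real.sqrt (l ^ 2 + 1) - l
    rw [h2σ, e3]
    apply div_nonneg _ (by positivity)
    -- 0 ≤ numP x γ μ (1/σ)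
    have hnum0 : 0 ≤ numP x γ μ 0 := by
      have hFm : (0:ℝ) < FmN x γ μ := by
        simp only [FmN]
        nlinarith [mul_pos hxp (sub_pos.2 hμγ), pow_pos hxp 2, pow_pos hxp 4,
          mul_pos (pow_pos hxp 3) (show (0:ℝ) < 3*γ + μ by linarith)]
      have hFp : (0:ℝ) < FpN x γ μ := by
        simp only [FpN]
        nlinarith [mul_pos hxp (show (0:ℝ) < 3*γ - μ by linarith), pow_pos hxp 2,
          mul_pos (pow_pos hxp 3) (show (0:ℝ) < γ + μ by linarith)]
      have e : numP x γ μ 0 = (x ^ 2 + 1) * (FmN x γ μ * FpN x γ μ) := by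
        simp only [numP, FmN, FpN]; ring
      rw [e]
      positivity
    have hnumd : 0 ≤ numP x γ μ (γ - μ) := by
      have h := key_nonneg x μ (γ - μ) hxp.le hμ0 (by linarith)
      have e : μ + (γ - μ) = γ := by ring
      rwa [e] at h
    have hlin : numP x γ μ (1/σ) = numP x γ μ 0 + (1/σ) * (numP x γ μ 1 - numP x γ μ 0) := by
      simp only [numP]; ring
    have hlind : numP x γ μ (γ-μ) = numP x γ μ 0 + (γ-μ) * (numP x γ μ 1 - numP x γ μ 0) := by
      simp only [numP]; ring
    rw [hlin]
    exact interp _ _ _ _ hnum0 (by rw [← hlind]; exact hnumd) (by positivity) h1σ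

/-- fully explicit no-arbitrage domain for the Extremal Decorrelated SVI. -/
theorem extremal_decorrelated_domain (γ μ σ : ℝ) (hγ : -1 < γ) (hσ : 0 < σ) :
    (ArbitrageFree γ 2 0 μ σ ↔ 0 < γ ∧ |μ| < γ ∧ σ ≥ 1 / (γ - |μ|)) ∧
    (∀ q ∈ Set.Ioo (-1 : ℝ) 1, μ = q * γ →
      (ArbitrageFree γ 2 0 μ σ ↔ 0 < γ ∧ σ ≥ 1 / (γ * (1 - |q|)))) := by
  have main : ArbitrageFree γ 2 0 μ σ ↔ 0 < γ ∧ |μ| < γ ∧ σ ≥ 1 / (γ - |μ|) := by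
    constructor
    · intro h
      have h1 : 1 / σ ≤ γ - μ := necc γ μ σ hγ hσ h
      have h2 : 1 / σ ≤ γ + μ := by
        have := necc γ (-μ) σ hγ hσ (af_neg γ μ σ h)
        linarith
      have hσ' : 0 < 1 / σ := by positivity
      have habs : |μ| < γ := abs_lt.2 ⟨by linarith, by linarith⟩
      refine ⟨lt_of_le_of_lt (abs_nonneg μ) habs, habs, ?_⟩
      have hd : 0 < γ - |μ| := by linarith
      have h3 : 1 / σ ≤ γ - |μ| := by
        rcases abs_cases μ with ⟨he, _⟩ | ⟨he, _⟩ <;> rw [he] <;> linarith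
      rw [ge_iff_le, div_le_iff₀ hd]
      have h4 := mul_le_mul_of_nonneg_left h3 hσ.le
      rw [mul_one_div_cancel hσ.ne'] at h4
      linarith
    · rintro ⟨hγ0, habs, hσ'⟩
      have hd : 0 < γ - |μ| := by linarith
      have h1σ : 1 / σ ≤ γ - |μ| := by
        rw [ge_iff_le, div_le_iff₀ hd] at hσ'
        rw [div_le_iff₀ hσ]
        linarith
      rcases le_or_gt 0 μ with hm | hm
      · exact suff γ μ σ hm (by rwa [abs_of_nonneg hm] at habs) hσ
          (by rwa [abs_of_nonneg hm] at h1σ)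
      · have h := suff γ (-μ) σ (by linarith) (by rwa [abs_of_neg hm] at habs) hσ
          (by rwa [abs_of_neg hm] at h1σ)
        have h2 := af_neg γ (-μ) σ h
        rwa [neg_neg] at h2
  refine ⟨main, ?_⟩
  rintro q hq rfl
  obtain ⟨hq1, hq2⟩ := hq
  rw [main]
  have habsq : |q| < 1 := abs_lt.2 ⟨hq1, hq2⟩
  constructor
  · rintro ⟨hγ0, habs, hσ'⟩
    refine ⟨hγ0, ?_⟩
    rwa [show γ - |q * γ| = γ * (1 - |q|) by rw [abs_mul, abs_of_pos hγ0]; ring] at hσ'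
  · rintro ⟨hγ0, hσ'⟩
    have habs : |q * γ| < γ := by
      rw [abs_mul, abs_of_pos hγ0]
      nlinarith [abs_nonneg q]
    refine ⟨hγ0, habs, ?_⟩
    rwa [show γ - |q * γ| = γ * (1 - |q|) by rw [abs_mul, abs_of_pos hγ0]; ring]
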